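/- For φ ∈ (0, π), the function ψ_s(φ) = π/2 + (1/2)·arctan(√3(3-cos φ)/(-1-cos φ)) is strictly decreasing, with values in the interval (π/4, π/3). -/

import Mathlib

open Real Set

noncomputable def ψs (φ : ℝ) : ℝ :=
  π / 2 + Real.arctan (Real.sqrt 3 * (3 - Real.cos φ) / (-1 - Real.cos φ)) / 2

lemma gmono {a b : ℝ} (ha : -1 < a) (hab : a < b) :
    Real.sqrt 3 * (3 - a) / (-1 - a) < Real.sqrt 3 * (3 - b) / (-1 - b) := by
  have hs : (0:ℝ) < Real.sqrt 3 := by positivity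
  have h1 : (0:ℝ) < 1 + a := by linarith
  have h2 : (0:ℝ) < 1 + b := by linarith
  have e1 : (-1 - a) = -(1 + a) := by ring
  have e2 : (-1 - b) = -(1 + b) := by ring
  rw [e1, e2, div_neg, div_neg, neg_lt_neg_iff, div_lt_div_iff₀ h2 h1]
  nlinarith

lemma arctan_sqrt_three : Real.arctan (Real.sqrt 3) = π / 3 := by
  rw [← Real.tan_pi_div_three, Real.arctan_tan] <;> nlinarith [Real.pi_pos]

lemma cos_gt_neg_one {y : ℝ} (h0 : 0 ≤ y) (hπ : y < π) : -1 < Real.cos y := by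
  have := Real.cos_lt_cos_of_nonneg_of_le_pi h0 (le_refl π) hπ
  rwa [Real.cos_pi] at this

lemma cos_lt_one' {y : ℝ} (h0 : 0 < y) (hπ : y ≤ π) : Real.cos y < 1 := by
  have := Real.cos_lt_cos_of_nonneg_of_le_pi (le_refl 0) hπ h0
  rwa [Real.cos_zero] at this

theorem psi_s_strictAnti_and_range :
    StrictAntiOn ψs (Ioo 0 π) ∧
      ∀ φ ∈ Ioo (0 : ℝ) π, ψs φ ∈ Ioo (π / 4) (π / 3) := by
  constructor
  · intro x hx y hy hxy
    have hcy : -1 < Real.cos y := cos_gt_neg_one (le_of_lt hy.1) hy.2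
    have hcc : Real.cos y < Real.cos x :=
      Real.cos_lt_cos_of_nonneg_of_le_pi (le_of_lt hx.1) (le_of_lt hy.2) hxy
    have := Real.arctan_strictMono (gmono hcy hcc)
    unfold ψs; linarith
  · intro φ hφ
    have hc1 : -1 < Real.cos φ := cos_gt_neg_one (le_of_lt hφ.1) hφ.2
    have hc2 : Real.cos φ < 1 := cos_lt_one' hφ.1 (le_of_lt hφ.2)
    have hlo := Real.neg_pi_div_two_lt_arctan
      (Real.sqrt 3 * (3 - Real.cos φ) / (-1 - Real.cos φ))
    have hkey := gmono hc1 hc2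
    have e : Real.sqrt 3 * (3 - (1:ℝ)) / (-1 - 1) = -Real.sqrt 3 := by ring
    rw [e] at hkey
    have hhi := Real.arctan_strictMono hkey
    rw [Real.arctan_neg, _root_.arctan_sqrt_three] at hhi
    constructor
    · unfold ψs; linarith
    · unfold ψs; linarith
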